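/- Let |1⟩,|2⟩,|3⟩ be the standard orthonormal basis of ℂ³ and |ψ⟩ = (|1⟩+|2⟩+|3⟩)/√3. Define A_i = (1/2)(1 − |i⟩⟨i|) for i = 1,2,3, B_1 = (1/2)|ψ⟩⟨ψ|, B_2 = 1 − B_1. Then there exists no family of positive semidefinite 3×3 complex matrices J_{ij} (i ∈ {1,2,3}, j ∈ {1,2}) satisfying J_{i1} + J_{i2} = A_i for all i and ∑_{i=1}^3 J_{ij} = B_j for j = 1,2. That is, the POVMs A = (A_1,A_2,A_3) and B = (B_1,B_2) are not jointly measurable. -/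

import Mathlib

open Matrix Finset
open scoped ComplexOrder

/-- An effect on `ℂ^d`: a matrix `E` with `0 ≤ E ≤ 1`, i.e. both `E` and `1 - E`
are positive semidefinite. -/
def IsEffect {d : ℕ} (E : Matrix (Fin d) (Fin d) ℂ) : Prop :=
  E.PosSemidef ∧ (1 - E).PosSemidef

/-- An `n`-outcome POVM: a tuple of effects summing to the identity. -/
def IsPOVM {d n : ℕ} (A : Fin n → Matrix (Fin d) (Fin d) ℂ) : Prop :=
  (∀ k, IsEffect (A k)) ∧ ∑ k, A k = 1

/-- Two finite POVMs are coexistent if their ranges (sums of effects over arbitrary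
outcome subsets) are contained in the range of a single POVM `M`. -/
def Coexistent {d n m : ℕ} (A : Fin n → Matrix (Fin d) (Fin d) ℂ)
    (B : Fin m → Matrix (Fin d) (Fin d) ℂ) : Prop :=
  ∃ (N : ℕ) (M : Fin N → Matrix (Fin d) (Fin d) ℂ), IsPOVM M ∧
    (∀ X : Finset (Fin n), ∃ Z : Finset (Fin N), ∑ k ∈ X, A k = ∑ l ∈ Z, M l) ∧
    (∀ Y : Finset (Fin m), ∃ Z : Finset (Fin N), ∑ j ∈ Y, B j = ∑ l ∈ Z, M l)

/-- Two finite POVMs are jointly measurable if they are the margins of a single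
POVM `J` indexed by pairs of outcomes. -/
def JointlyMeasurable {d n m : ℕ} (A : Fin n → Matrix (Fin d) (Fin d) ℂ)
    (B : Fin m → Matrix (Fin d) (Fin d) ℂ) : Prop :=
  ∃ J : Fin n → Fin m → Matrix (Fin d) (Fin d) ℂ,
    (∀ k j, (J k j).PosSemidef) ∧
    (∀ k, ∑ j, J k j = A k) ∧
    (∀ j, ∑ k, J k j = B j)

/-- The unit vector `|ψ⟩ = (|1⟩ + |2⟩ + |3⟩)/√3` in `ℂ³`. -/
noncomputable def ψ : Fin 3 → ℂ := fun _ => 1 / (Real.sqrt 3 : ℂ)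

/-- The effects `A_i = (1/2)(1 - |i⟩⟨i|)` on `ℂ³`. -/
noncomputable def Aeff (i : Fin 3) : Matrix (Fin 3) (Fin 3) ℂ :=
  (1 / 2 : ℂ) • (1 - Matrix.single i i 1)

/-- The effect `B_1 = (1/2)|ψ⟩⟨ψ|` on `ℂ³`. -/
noncomputable def Beff : Matrix (Fin 3) (Fin 3) ℂ :=
  (1 / 2 : ℂ) • Matrix.vecMulVec ψ (star ψ)

lemma psd_diag {n : ℕ} {M : Matrix (Fin n) (Fin n) ℂ} (hM : M.PosSemidef) (i : Fin n) :
    0 ≤ M i i := by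
  have h := hM.dotProduct_mulVec_nonneg (Pi.single i 1)
  simpa [dotProduct, mulVec, Pi.single_apply, Finset.mul_sum] using h

lemma psd_diag_re {n : ℕ} {M : Matrix (Fin n) (Fin n) ℂ} (hM : M.PosSemidef) (i : Fin n) :
    0 ≤ (M i i).re := by
  have := psd_diag hM i; rw [Complex.le_def] at this; simpa using this.1

lemma Beff_apply (k l : Fin 3) : Beff k l = 1/6 := by
  have h3 : ((Real.sqrt 3 : ℝ) : ℂ) * ((Real.sqrt 3 : ℝ) : ℂ) = 3 := by
    rw [← Complex.ofReal_mul, Real.mul_self_sqrt (by norm_num)]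
    norm_num
  have hne : ((Real.sqrt 3 : ℝ) : ℂ) ≠ 0 := by
    intro h; rw [h, mul_zero] at h3; norm_num at h3
  simp [Beff, vecMulVec_apply, ψ, Complex.conj_ofReal]
  field_simp
  linear_combination (-2 : ℂ) * h3

lemma psd2 {N : Matrix (Fin 2) (Fin 2) ℂ} (hN : N.PosSemidef) :
    Complex.normSq (N 0 1) ≤ (N 0 0).re * (N 1 1).re := by
  have h10 : N 1 0 = starRingEnd ℂ (N 0 1) := by
    have := congrFun (congrFun hN.1 1) 0
    simpa [conjTranspose_apply] using this.symm
  have key : ∀ s : ℝ, 0 ≤ ((N 0 0).re * Complex.normSq (N 0 1)) * (s * s)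
      + (-2 * Complex.normSq (N 0 1)) * s + (N 1 1).re := by
    intro s
    have h := hN.dotProduct_mulVec_nonneg ![-(s:ℂ) * N 0 1, 1]
    have e : star (![-(s:ℂ) * N 0 1, 1]) ⬝ᵥ (N *ᵥ ![-(s:ℂ) * N 0 1, 1])
        = ((s:ℂ) * s * Complex.normSq (N 0 1)) * N 0 0
          - 2 * s * Complex.normSq (N 0 1) + N 1 1 := by
      simp [dotProduct, mulVec, Fin.sum_univ_two, h10, Complex.normSq_eq_conj_mul_self]
      ring
    rw [e, Complex.le_def] at h
    have h2 := h.1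
    have hAim : (N 0 0).im = 0 := by
      have := psd_diag hN 0
      rw [Complex.le_def] at this; exact this.2.symm
    simp [Complex.add_re, Complex.sub_re, Complex.mul_re, Complex.mul_im, hAim] at h2
    nlinarith [h2]
  have hd := discrim_le_zero key
  have hA : 0 ≤ (N 0 0).re := psd_diag_re hN 0
  have hB : 0 ≤ (N 1 1).re := psd_diag_re hN 1
  have hg : 0 ≤ Complex.normSq (N 0 1) := Complex.normSq_nonneg _
  rw [discrim] at hd
  rcases eq_or_lt_of_le hg with h0 | h0
  · rw [← h0]; positivity
  · nlinarith [hd]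

lemma psd3 {M : Matrix (Fin 3) (Fin 3) ℂ} (hM : M.PosSemidef) (i j : Fin 3) :
    Complex.normSq (M i j) ≤ (M i i).re * (M j j).re := by
  have := psd2 (hM.submatrix ![i, j])
  simpa using this

/-- There is no family of positive semidefinite matrices `J i j` with margins
`A = (A_1, A_2, A_3)` and `B = (B_1, 1 - B_1)`: the two POVMs are not jointly measurable. -/
theorem not_jointlyMeasurable :
    ¬ ∃ J : Fin 3 → Fin 2 → Matrix (Fin 3) (Fin 3) ℂ,
      (∀ i j, (J i j).PosSemidef) ∧
      (∀ i, ∑ j, J i j = Aeff i) ∧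
      (∀ j, ∑ i, J i j = (![Beff, 1 - Beff]) j) := by
  rintro ⟨J, hpsd, hA, hB⟩
  have hAe : ∀ i k l : Fin 3, J i 0 k l + J i 1 k l = Aeff i k l := by
    intro i k l
    have := congrArg (fun M => M k l) (hA i)
    simpa [Fin.sum_univ_two] using this
  have hBe : ∀ k l : Fin 3, J 0 0 k l + J 1 0 k l + J 2 0 k l = 1/6 := by
    intro k l
    have := congrArg (fun M => M k l) (hB 0)
    simpa [Fin.sum_univ_three, Beff_apply] using this
  have hAdiag : ∀ i : Fin 3, Aeff i i i = 0 := by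
    intro i; simp [Aeff, Matrix.one_apply]
  -- diagonal of J i 0 at (i,i) vanishes
  have hdiag0 : ∀ i : Fin 3, J i 0 i i = 0 := by
    intro i
    have h0 := psd_diag (hpsd i 0) i
    have h1 := psd_diag (hpsd i 1) i
    have hs := hAe i i i
    rw [hAdiag] at hs
    have hle : J i 0 i i ≤ 0 := by
      calc J i 0 i i ≤ J i 0 i i + J i 1 i i := le_add_of_nonneg_right h1
      _ = 0 := hs
    exact le_antisymm hle h0
  -- whole row i and column i of J i 0 vanish
  have hrow : ∀ i l : Fin 3, J i 0 i l = 0 := by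
    intro i l
    have h := psd3 (hpsd i 0) i l
    rw [hdiag0 i] at h
    simp at h
    have := Complex.normSq_nonneg (J i 0 i l)
    have h0 : Complex.normSq (J i 0 i l) = 0 := le_antisymm h this
    exact Complex.normSq_eq_zero.mp h0
  have hcol : ∀ i l : Fin 3, J i 0 l i = 0 := by
    intro i l
    have h := psd3 (hpsd i 0) l i
    rw [hdiag0 i] at h
    simp at h
    have := Complex.normSq_nonneg (J i 0 l i)
    have h0 : Complex.normSq (J i 0 l i) = 0 := le_antisymm h this
    exact Complex.normSq_eq_zero.mp h0
  -- off-diagonal values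
  have e201 : J 2 0 0 1 = 1/6 := by
    have := hBe 0 1; rw [hrow 0 1, hcol 1 0] at this; simpa using this
  have e102 : J 1 0 0 2 = 1/6 := by
    have := hBe 0 2; rw [hrow 0 2, hcol 2 0] at this; simpa using this
  have e012 : J 0 0 1 2 = 1/6 := by
    have := hBe 1 2; rw [hrow 1 2, hcol 2 1] at this; simpa using this
  -- diagonal sums
  have d00 : (J 1 0 0 0).re + (J 2 0 0 0).re = 1/6 := by
    have := hBe 0 0; rw [hrow 0 0] at this
    have := congrArg Complex.re this; simpa using this
  have d11 : (J 0 0 1 1).re + (J 2 0 1 1).re = 1/6 := by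
    have := hBe 1 1; rw [hrow 1 1] at this
    have := congrArg Complex.re this; simpa using this
  have d22 : (J 0 0 2 2).re + (J 1 0 2 2).re = 1/6 := by
    have := hBe 2 2; rw [hrow 2 2] at this
    have := congrArg Complex.re this; simpa using this
  -- products
  have hns : Complex.normSq (1/6 : ℂ) = 1/36 := by
    norm_num [Complex.normSq_apply]
  have q2 := psd3 (hpsd 2 0) 0 1
  rw [e201, hns] at q2
  have q1 := psd3 (hpsd 1 0) 0 2
  rw [e102, hns] at q1
  have q0 := psd3 (hpsd 0 0) 1 2
  rw [e012, hns] at q0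
  have n1 := psd_diag_re (hpsd 1 0) 0
  have n2 := psd_diag_re (hpsd 2 0) 0
  have n3 := psd_diag_re (hpsd 0 0) 1
  have n4 := psd_diag_re (hpsd 2 0) 1
  have n5 := psd_diag_re (hpsd 0 0) 2
  have n6 := psd_diag_re (hpsd 1 0) 2
  nlinarith [q0, q1, q2, d00, d11, d22, n1, n2, n3, n4, n5, n6,
    mul_nonneg n2 n4, mul_nonneg n1 n6, mul_nonneg n3 n5]
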